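/- arXiv:1406.2370 — 2 statements merged into one kernel-verified Lean document; each statement's English description precedes it below -/
import Mathlib

section
/- In any of the four linear substitution calculi (Name, Value-LR, Value-RL, Need), if t (⊸ₘ ∪ ⊸ₑ ∪ ≡)* u, then t (⊸ₘ ∪ ⊸ₑ)* ≡ u, and moreover the number of ⊸ₘ steps and the number of ⊸ₑ steps in the two reduction sequences are exactly the same. -/
/-- Reduction sequences mixing multiplicative steps, exponential steps and
    structural-equivalence steps, counting the numbers of ⊸ₘ and ⊸ₑ steps. -/
inductive MixedSeq {α : Type*} (Rm Re E : α → α → Prop) : ℕ → ℕ → α → α → Prop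
  | refl (a : α) : MixedSeq Rm Re E 0 0 a a
  | mstep {a b c : α} {m e : ℕ} :
      Rm a b → MixedSeq Rm Re E m e b c → MixedSeq Rm Re E (m + 1) e a c
  | estep {a b c : α} {m e : ℕ} :
      Re a b → MixedSeq Rm Re E m e b c → MixedSeq Rm Re E m (e + 1) a c
  | eqstep {a b c : α} {m e : ℕ} :
      E a b → MixedSeq Rm Re E m e b c → MixedSeq Rm Re E m e a c

/-- Reduction sequences of ⊸ₘ and ⊸ₑ steps only, with counts. -/
inductive RedSeq {α : Type*} (Rm Re : α → α → Prop) : ℕ → ℕ → α → α → Prop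
  | refl (a : α) : RedSeq Rm Re 0 0 a a
  | mstep {a b c : α} {m e : ℕ} :
      Rm a b → RedSeq Rm Re m e b c → RedSeq Rm Re (m + 1) e a c
  | estep {a b c : α} {m e : ℕ} :
      Re a b → RedSeq Rm Re m e b c → RedSeq Rm Re m (e + 1) a c


theorem redseq_lift {α : Type*} {Rm Re E : α → α → Prop}
    (hbisimM : ∀ t u t', E t u → Rm t t' → ∃ u', Rm u u' ∧ E t' u')
    (hbisimE : ∀ t u t', E t u → Re t t' → ∃ u', Re u u' ∧ E t' u') :
    ∀ {m e : ℕ} {t w u : α}, RedSeq Rm Re m e t w → E t u →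
      ∃ w', RedSeq Rm Re m e u w' ∧ E w w' := by
  intro m e t w u h
  induction h generalizing u with
  | refl a => exact fun he => ⟨u, RedSeq.refl u, he⟩
  | mstep hr _ ih =>
    intro he
    obtain ⟨u', hu', he'⟩ := hbisimM _ _ _ he hr
    obtain ⟨w', hw', he''⟩ := ih he'
    exact ⟨w', RedSeq.mstep hu' hw', he''⟩
  | estep hr _ ih =>
    intro he
    obtain ⟨u', hu', he'⟩ := hbisimE _ _ _ he hr
    obtain ⟨w', hw', he''⟩ := ih he'
    exact ⟨w', RedSeq.estep hu' hw', he''⟩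

/-- Postponement of structural equivalence: in any of the four linear
    substitution calculi (whose structural equivalence ≡ is an equivalence and a
    strong bisimulation with respect to ⊸ₘ and ⊸ₑ), if
    `t (⊸ₘ ∪ ⊸ₑ ∪ ≡)* u` then `t (⊸ₘ ∪ ⊸ₑ)* ≡ u` with exactly the same
    numbers of ⊸ₘ and ⊸ₑ steps. -/
theorem structural_equivalence_postponement {α : Type*}
    (Rm Re E : α → α → Prop)
    (hequiv : Equivalence E)
    (hbisimM : ∀ t u t', E t u → Rm t t' → ∃ u', Rm u u' ∧ E t' u')
    (hbisimE : ∀ t u t', E t u → Re t t' → ∃ u', Re u u' ∧ E t' u') :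
    ∀ (m e : ℕ) (t u : α), MixedSeq Rm Re E m e t u →
      ∃ w, RedSeq Rm Re m e t w ∧ E w u := by
  intro m e t u h
  induction h with
  | refl a => exact ⟨a, RedSeq.refl a, hequiv.refl a⟩
  | mstep hr _ ih =>
    obtain ⟨w, hw, he⟩ := ih
    exact ⟨w, RedSeq.mstep hr hw, he⟩
  | estep hr _ ih =>
    obtain ⟨w, hw, he⟩ := ih
    exact ⟨w, RedSeq.estep hr hw, he⟩
  | eqstep hE _ ih =>
    obtain ⟨w, hw, he⟩ := ih
    obtain ⟨w', hw', he'⟩ := redseq_lift hbisimM hbisimE hw (hequiv.symm hE)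
    exact ⟨w', hw', hequiv.trans (hequiv.symm he') he⟩
end

section
/- Abstract Reflection for reflective distilleries: let D be a reflective distillery, s a reachable state, and x ∈ {m, e}. If decode(s) ⊸ₓ u then there exists a state s' such that nf_c(s) →ₓ s' and decode(s') ≡ u, where nf_c(s) is the unique commutative normal form of s. -/
/-- Abstract Reflection for reflective distilleries: every step of the calculus
    on the decoding of a reachable state `s` is reflected by the machine from
    the commutative normal form `nfc s` of `s`. All the ingredients of a
    reflective distillery appear as hypotheses. -/
theorem distillery_reflection {σ τ : Type*}
    (Rc Rmm Rme : σ → σ → Prop)            -- machine transitions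
    (Cm Ce : τ → τ → Prop)                 -- the calculus
    (E : τ → τ → Prop)                     -- structural equivalence
    (decode : σ → τ)
    (reachable : σ → Prop)
    (nfc : σ → σ)                          -- commutative normal form
    (hreach : ∀ s s', reachable s → (Rc s s' ∨ Rmm s s' ∨ Rme s s') → reachable s')
    -- determinism of the machine
    (hdetMach : ∀ s s₁ s₂, (Rc s s₁ ∨ Rmm s s₁ ∨ Rme s s₁) →
      (Rc s s₂ ∨ Rmm s s₂ ∨ Rme s s₂) → s₁ = s₂)
    -- determinism of the calculus: at most one redex per term
    (hdetCalc : ∀ t u₁ u₂, (Cm t u₁ ∨ Ce t u₁) → (Cm t u₂ ∨ Ce t u₂) → u₁ = u₂)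
    (hdetLabel : ∀ t u₁ u₂, Cm t u₁ → Ce t u₂ → False)
    -- structural equivalence is an equivalence and a strong bisimulation
    (hequiv : Equivalence E)
    (hbisimM : ∀ t u t', E t u → Cm t t' → ∃ u', Cm u u' ∧ E t' u')
    (hbisimE : ∀ t u t', E t u → Ce t t' → ∃ u', Ce u u' ∧ E t' u')
    -- distillation conditions on reachable states
    (hdecC : ∀ s s', reachable s → Rc s s' → E (decode s) (decode s'))
    (hdecM : ∀ s s', reachable s → Rmm s s' →
      ∃ w, Cm (decode s) w ∧ E w (decode s'))
    (hdecE : ∀ s s', reachable s → Rme s s' →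
      ∃ w, Ce (decode s) w ∧ E w (decode s'))
    -- Termination: `nfc s` is the commutative normal form of `s`
    (hnfc : ∀ s, reachable s →
      Relation.ReflTransGen Rc s (nfc s) ∧ ∀ s', ¬ Rc (nfc s) s')
    -- Progress
    (hprogM : ∀ s t, reachable s → (∀ s', ¬ Rc s s') → Cm (decode s) t →
      ∃ s', Rmm s s')
    (hprogE : ∀ s t, reachable s → (∀ s', ¬ Rc s s') → Ce (decode s) t →
      ∃ s', Rme s s') :
    ∀ s u, reachable s →
      (Cm (decode s) u → ∃ s', Rmm (nfc s) s' ∧ E (decode s') u) ∧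
      (Ce (decode s) u → ∃ s', Rme (nfc s) s' ∧ E (decode s') u) := by

  intro s u hs
  obtain ⟨hsteps, hnf⟩ := hnfc s hs
  -- reachable (nfc s) and E (decode s) (decode (nfc s))
  have key : ∀ n, Relation.ReflTransGen Rc s n →
      reachable n ∧ E (decode s) (decode n) := by
    intro n h
    induction h with
    | refl => exact ⟨hs, hequiv.refl _⟩
    | tail hab hbc ih =>
      obtain ⟨hr, hE⟩ := ih
      exact ⟨hreach _ _ hr (Or.inl hbc),
        hequiv.trans hE (hdecC _ _ hr hbc)⟩
  obtain ⟨hrn, hE⟩ := key _ hsteps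
  constructor
  · intro hCm
    obtain ⟨u', hCm', hEu⟩ := hbisimM _ _ _ hE hCm
    obtain ⟨s', hR⟩ := hprogM _ _ hrn hnf hCm'
    obtain ⟨w, hw, hwE⟩ := hdecM _ _ hrn hR
    have : w = u' := hdetCalc _ _ _ (Or.inl hw) (Or.inl hCm')
    subst this
    exact ⟨s', hR, hequiv.symm (hequiv.trans hEu hwE)⟩
  · intro hCe
    obtain ⟨u', hCe', hEu⟩ := hbisimE _ _ _ hE hCe
    obtain ⟨s', hR⟩ := hprogE _ _ hrn hnf hCe'
    obtain ⟨w, hw, hwE⟩ := hdecE _ _ hrn hR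
    have : w = u' := hdetCalc _ _ _ (Or.inr hw) (Or.inr hCe')
    subst this
    exact ⟨s', hR, hequiv.symm (hequiv.trans hEu hwE)⟩
end
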